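/- Transfer function of the ADRC controller: Let k1, k2, k3, g1, g2, g3, g4 ∈ ℝ, work in the field F = ℝ(s) of rational functions over ℝ, and let M be the 4×4 matrix over F whose entries are the constants given by rows (−g1, 1, 0, 0); (−g2, 0, 1, 0); (−g3 − k1, −k2, −k3, 0); (−g4, 0, 0, 0). Then det(s·I − M) = s^4 + q̂6·s^3 + q̂5·s^2 + q̂4·s (so s·I − M is invertible over F), and the scalar obtained as the product [k1, k2, k3, 1]·(s·I − M)^{-1}·(g1, g2, g3, g4)^T equals (q̂3·s^3 + q̂2·s^2 + q̂1·s + q̂0) / (s^4 + q̂6·s^3 + q̂5·s^2 + q̂4·s), where q̂6 = g1 + k3, q̂5 = g2 + k2 + g1·k3, q̂4 = g3 + k1 + g1·k2 + g2·k3, q̂3 = g4 + g1·k1 + g2·k2 + g3·k3, q̂2 = g2·k1 + g3·k2 + g4·k3, q̂1 = g3·k1 + g4·k2, q̂0 = g4·k1. -/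

import Mathlib

set_option synthInstance.maxHeartbeats 400000
set_option maxHeartbeats 800000

open RatFunc Matrix

lemma adrc_cubic_ne_zero (a b c : ℝ) :
    (RatFunc.X : RatFunc ℝ)^3 + RatFunc.C a * RatFunc.X^2 + RatFunc.C b * RatFunc.X + RatFunc.C c ≠ 0 := by
  have h : (Polynomial.X^3 + Polynomial.C a * Polynomial.X^2 + Polynomial.C b * Polynomial.X + Polynomial.C c : Polynomial ℝ) ≠ 0 := by
    intro h
    have := congrArg (fun p => Polynomial.coeff p 3) h
    simp [Polynomial.coeff_X_pow, Polynomial.coeff_C] at this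
  have := RatFunc.algebraMap_ne_zero h
  simpa [_root_.map_add, _root_.map_mul, map_pow, RatFunc.algebraMap_C, RatFunc.algebraMap_X] using this

/-- Transfer function of the ADRC controller: the controller system matrix has the stated
characteristic determinant (hence `s·I − M` is invertible over `ℝ(s)`), and the controller
transfer-function numerator/denominator formula holds. -/
theorem adrc_controller_transfer_function
    (k1 k2 k3 g1 g2 g3 g4 : ℝ) :
    let s : RatFunc ℝ := RatFunc.X
    let M : Matrix (Fin 4) (Fin 4) (RatFunc ℝ) :=
      !![RatFunc.C (-g1), 1, 0, 0;
         RatFunc.C (-g2), 0, 1, 0;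
         RatFunc.C (-g3 - k1), RatFunc.C (-k2), RatFunc.C (-k3), 0;
         RatFunc.C (-g4), 0, 0, 0]
    let S : Matrix (Fin 4) (Fin 4) (RatFunc ℝ) :=
      s • (1 : Matrix (Fin 4) (Fin 4) (RatFunc ℝ)) - M
    S.det = s ^ 4 + RatFunc.C (g1 + k3) * s ^ 3 + RatFunc.C (g2 + k2 + g1 * k3) * s ^ 2
        + RatFunc.C (g3 + k1 + g1 * k2 + g2 * k3) * s ∧
    IsUnit S.det ∧
    dotProduct ![RatFunc.C k1, RatFunc.C k2, RatFunc.C k3, 1]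
        (S⁻¹.mulVec ![RatFunc.C g1, RatFunc.C g2, RatFunc.C g3, RatFunc.C g4]) =
      (RatFunc.C (g4 + g1 * k1 + g2 * k2 + g3 * k3) * s ^ 3
          + RatFunc.C (g2 * k1 + g3 * k2 + g4 * k3) * s ^ 2
          + RatFunc.C (g3 * k1 + g4 * k2) * s
          + RatFunc.C (g4 * k1)) /
        (s ^ 4 + RatFunc.C (g1 + k3) * s ^ 3 + RatFunc.C (g2 + k2 + g1 * k3) * s ^ 2
          + RatFunc.C (g3 + k1 + g1 * k2 + g2 * k3) * s) := by
  intro s M S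
  set D3 : RatFunc ℝ := s^3 + RatFunc.C (g1 + k3) * s^2 + RatFunc.C (g2 + k2 + g1 * k3) * s
      + RatFunc.C (g3 + k1 + g1 * k2 + g2 * k3) with hD3
  have hs : s ≠ 0 := RatFunc.X_ne_zero
  have hD3ne : D3 ≠ 0 := adrc_cubic_ne_zero _ _ _
  have hS : S = !![s + RatFunc.C g1, -1, 0, 0;
                   RatFunc.C g2, s, -1, 0;
                   RatFunc.C g3 + RatFunc.C k1, RatFunc.C k2, s + RatFunc.C k3, 0;
                   RatFunc.C g4, 0, 0, s] := by
    funext i j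
    fin_cases i <;> fin_cases j <;>
      simp [S, M, Matrix.one_apply, map_sub, map_neg, Matrix.vecHead, Matrix.vecTail] <;> ring
  have hdet : S.det = s * D3 := by
    rw [hS, hD3]
    simp [Matrix.det_succ_row_zero, Fin.sum_univ_succ, Fin.succAbove, Matrix.submatrix,
      _root_.map_add, _root_.map_mul]
    ring
  have hdet' : S.det = s ^ 4 + RatFunc.C (g1 + k3) * s ^ 3 + RatFunc.C (g2 + k2 + g1 * k3) * s ^ 2
      + RatFunc.C (g3 + k1 + g1 * k2 + g2 * k3) * s := by
    rw [hdet, hD3]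
    simp only [_root_.map_add, _root_.map_mul]
    ring
  have hunit : IsUnit S.det := by
    rw [isUnit_iff_ne_zero, hdet]
    exact mul_ne_zero hs hD3ne
  refine ⟨hdet', hunit, ?_⟩
  set w : Fin 4 → RatFunc ℝ :=
    ![(RatFunc.C g1 * s^2 + RatFunc.C (g1*k3 + g2) * s + RatFunc.C (g1*k2 + g2*k3 + g3)) * s,
      (RatFunc.C g2 * s^2 + RatFunc.C (g3 + g2*k3) * s - RatFunc.C (g1*k1)) * s,
      (RatFunc.C g3 * s^2 - RatFunc.C (g1*k1 + g2*k2) * s - RatFunc.C (g2*k1)) * s,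
      RatFunc.C g4 * (s^3 + RatFunc.C k3 * s^2 + RatFunc.C k2 * s + RatFunc.C k1)] with hw
  have hsd : s * D3 ≠ 0 := mul_ne_zero hs hD3ne
  have hSw : S.mulVec w = (s * D3) • ![RatFunc.C g1, RatFunc.C g2, RatFunc.C g3, RatFunc.C g4] := by
    rw [hS]
    funext i
    fin_cases i <;>
    · simp [hw, Matrix.mulVec, dotProduct, Fin.sum_univ_four, Matrix.vecHead,
        Matrix.vecTail, smul_eq_mul]
      rw [hD3]
      simp only [_root_.map_add, _root_.map_mul]
      ring
  have hSv : S.mulVec ((s * D3)⁻¹ • w) = ![RatFunc.C g1, RatFunc.C g2, RatFunc.C g3, RatFunc.C g4] := by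
    rw [Matrix.mulVec_smul, hSw, smul_smul, inv_mul_cancel₀ hsd, one_smul]
  have hinv : S⁻¹.mulVec ![RatFunc.C g1, RatFunc.C g2, RatFunc.C g3, RatFunc.C g4]
      = (s * D3)⁻¹ • w := by
    rw [← hSv, Matrix.mulVec_mulVec, Matrix.nonsing_inv_mul S hunit, Matrix.one_mulVec]
  rw [hinv]
  have hden : s ^ 4 + RatFunc.C (g1 + k3) * s ^ 3 + RatFunc.C (g2 + k2 + g1 * k3) * s ^ 2
      + RatFunc.C (g3 + k1 + g1 * k2 + g2 * k3) * s = s * D3 := by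
    rw [hD3]; ring
  rw [hden, div_eq_mul_inv]
  simp only [hw, dotProduct, Fin.sum_univ_four, Matrix.cons_val_zero,
    Matrix.cons_val_one, Matrix.head_cons, Matrix.cons_val_two, Matrix.cons_val_three,
    Matrix.tail_cons, Pi.smul_apply, smul_eq_mul]
  simp only [_root_.map_add, _root_.map_mul]
  ring
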